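/- If G is an unmixed graph with 2n non-isolated vertices such that the minimum cardinality of a vertex cover equals n, then G has a perfect matching. -/

import Mathlib

open SimpleGraph

/-- `C` is a vertex cover of `G`. -/
def IsVC {V : Type*} (G : SimpleGraph V) (C : Set V) : Prop :=
  ∀ ⦃u v : V⦄, G.Adj u v → u ∈ C ∨ v ∈ C

/-- `C` is a minimal (inclusion-wise) vertex cover of `G`. -/
def IsMinVC {V : Type*} (G : SimpleGraph V) (C : Set V) : Prop :=
  IsVC G C ∧ ∀ C' : Set V, C' ⊆ C → IsVC G C' → C' = C

/-- `A` is an independent set of `G`. -/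
def IsIndep {V : Type*} (G : SimpleGraph V) (A : Set V) : Prop :=
  ∀ ⦃u v : V⦄, u ∈ A → v ∈ A → ¬ G.Adj u v

/-- `A` is a maximal independent set of `G`. -/
def IsMaxIndep {V : Type*} (G : SimpleGraph V) (A : Set V) : Prop :=
  IsIndep G A ∧ ∀ A' : Set V, A ⊆ A' → IsIndep G A' → A' = A

/-- `G` is unmixed: all minimal vertex covers have the same cardinality. -/
def Unmixed {V : Type*} (G : SimpleGraph V) : Prop :=
  ∀ C₁ C₂ : Set V, IsMinVC G C₁ → IsMinVC G C₂ → C₁.ncard = C₂.ncard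

/-- The set of neighbours of a set of vertices. -/
def nbrSet {V : Type*} (G : SimpleGraph V) (S : Set V) : Set V :=
  {v | ∃ s ∈ S, G.Adj v s}

section Aux

variable {V : Type*} {G : SimpleGraph V}

lemma indep_compl_of_isVC {C : Set V} (h : IsVC G C) : IsIndep G Cᶜ := by
  intro u v hu hv hadj
  rcases h hadj with h' | h'
  · exact hu h'
  · exact hv h'

lemma isVC_compl_of_indep {A : Set V} (h : IsIndep G A) : IsVC G Aᶜ := by
  intro u v hadj
  by_contra hc
  push_neg at hc
  obtain ⟨h1, h2⟩ := hc
  rw [Set.notMem_compl_iff] at h1 h2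
  exact h h1 h2 hadj

lemma isMaxIndep_compl_of_isMinVC {C : Set V} (h : IsMinVC G C) : IsMaxIndep G Cᶜ := by
  refine ⟨indep_compl_of_isVC h.1, ?_⟩
  intro A' hsub hindep
  have h2 : A'ᶜ ⊆ C := by
    intro x hx
    by_contra hxc
    exact hx (hsub hxc)
  have h3 := h.2 A'ᶜ h2 (isVC_compl_of_indep hindep)
  rw [← compl_compl A', h3]

lemma isMinVC_compl_of_isMaxIndep {A : Set V} (h : IsMaxIndep G A) : IsMinVC G Aᶜ := by
  refine ⟨isVC_compl_of_indep h.1, ?_⟩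
  intro C' hsub hvc
  have h2 : A ⊆ C'ᶜ := by
    intro x hx hxC'
    exact hsub hxC' hx
  have h3 := h.2 C'ᶜ h2 (indep_compl_of_isVC hvc)
  rw [← compl_compl C', h3]

lemma exists_minVC_subset [Fintype V] {C : Set V} (h : IsVC G C) :
    ∃ C₀, C₀ ⊆ C ∧ IsMinVC G C₀ := by
  obtain ⟨C₀, hC₀, hmin⟩ := Set.Finite.exists_minimalFor id {D : Set V | D ⊆ C ∧ IsVC G D}
    (Set.toFinite _) ⟨C, subset_rfl, h⟩
  refine ⟨C₀, hC₀.1, hC₀.2, ?_⟩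
  intro C' hsub hvc
  exact Set.Subset.antisymm hsub (hmin ⟨hsub.trans hC₀.1, hvc⟩ hsub)

lemma indep_empty : IsIndep G (∅ : Set V) := by
  intro u v hu
  exact (Set.notMem_empty u hu).elim

/-- Any independent subset of `X` extends to a maximal (within `X`) independent set. -/
lemma exists_maximal_indep_in [Fintype V] (X S₀ : Set V) (hS : S₀ ⊆ X) (hi : IsIndep G S₀) :
    ∃ R, S₀ ⊆ R ∧ R ⊆ X ∧ IsIndep G R ∧ ∀ v ∈ X, v ∉ R → ∃ u ∈ R, G.Adj u v := by
  obtain ⟨R, hR, hmax⟩ := Set.Finite.exists_maximalFor id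
    {R : Set V | S₀ ⊆ R ∧ R ⊆ X ∧ IsIndep G R} (Set.toFinite _) ⟨S₀, subset_rfl, hS, hi⟩
  refine ⟨R, hR.1, hR.2.1, hR.2.2, ?_⟩
  intro v hvX hvR
  by_contra hno
  push_neg at hno
  have hins : insert v R ∈ {R : Set V | S₀ ⊆ R ∧ R ⊆ X ∧ IsIndep G R} := by
    refine ⟨hR.1.trans (Set.subset_insert _ _), ?_, ?_⟩
    · intro x hx
      rcases hx with rfl | hx
      · exact hvX
      · exact hR.2.1 hx
    · intro x y hx hy hadj
      rcases hx with rfl | hx <;> rcases hy with rfl | hy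
      · exact G.irrefl hadj
      · exact hno y hy hadj.symm
      · exact hno x hx hadj
      · exact hR.2.2 hx hy hadj
  have h' : R = insert v R := Set.Subset.antisymm (Set.subset_insert _ _) (hmax hins (Set.subset_insert _ _))
  exact hvR (h' ▸ Set.mem_insert v R)

lemma isMaxIndep_of_dominating {I : Set V} (hi : IsIndep G I)
    (hdom : ∀ v, v ∉ I → ∃ u ∈ I, G.Adj u v) : IsMaxIndep G I := by
  refine ⟨hi, ?_⟩
  intro A' hsub hA'
  refine Set.Subset.antisymm ?_ hsub
  intro v hv
  by_contra hvI
  obtain ⟨u, hu, hadj⟩ := hdom v hvI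
  exact hA' (hsub hu) hv hadj

/-- Key lemma: in a well-covered graph, every independent set of non-isolated vertices
satisfies Hall's condition with respect to its neighbourhood. -/
lemma key_hall [Fintype V] {n : ℕ}
    (hwc : ∀ I : Set V, IsMaxIndep G I → I.ncard = n) :
    ∀ (k : ℕ) (S : Set V), S.ncard ≤ k → IsIndep G S → (∀ s ∈ S, ∃ u, G.Adj u s) →
      S.ncard ≤ (nbrSet G S).ncard := by
  intro k
  induction k with
  | zero =>
    intro S hS _ _
    exact le_trans hS (Nat.zero_le _)
  | succ k ih =>
    intro S hSk hSind hSni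
    by_contra hcon
    push_neg at hcon
    set T := nbrSet G S with hT
    have hSne : S.Nonempty := Set.nonempty_of_ncard_ne_zero (by omega)
    -- S and T are disjoint
    have hdisjST : ∀ x ∈ S, x ∉ T := by
      intro x hx hxT
      obtain ⟨s, hs, hadj⟩ := hxT
      exact hSind hx hs hadj
    -- W : maximal independent subset of T
    obtain ⟨W, -, hWT, hWind, hWdom⟩ := exists_maximal_indep_in T ∅ (Set.empty_subset _)
      indep_empty
    set NW := nbrSet G W with hNW
    set S' := S \ NW with hS'
    set X := (S ∪ T)ᶜ with hX
    set X₂ := X \ NW with hX₂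
    obtain ⟨R₂, -, hR2X2, hR2ind, hR2dom⟩ := exists_maximal_indep_in X₂ ∅ (Set.empty_subset _)
      indep_empty
    have hR2X : R₂ ⊆ X := hR2X2.trans Set.diff_subset
    obtain ⟨R₂', hR2sub, hR2'X, hR2'ind, hR2'dom⟩ := exists_maximal_indep_in X R₂ hR2X hR2ind
    -- basic membership facts
    have hXS : ∀ x ∈ X, x ∉ S := fun x hx h => hx (Or.inl h)
    have hXT : ∀ x ∈ X, x ∉ T := fun x hx h => hx (Or.inr h)
    have hWS : ∀ x ∈ W, x ∉ S := fun x hx h => hdisjST x h (hWT hx)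
    -- I₃ := S ∪ R₂' is a maximal independent set
    have hI₃ : IsMaxIndep G (S ∪ R₂') := by
      apply isMaxIndep_of_dominating
      · intro u v hu hv hadj
        rcases hu with hu | hu <;> rcases hv with hv | hv
        · exact hSind hu hv hadj
        · exact hXT _ (hR2'X hv) ⟨u, hu, hadj.symm⟩
        · exact hXT _ (hR2'X hu) ⟨v, hv, hadj⟩
        · exact hR2'ind hu hv hadj
      · intro v hv
        by_cases hvT : v ∈ T
        · obtain ⟨s, hs, hadj⟩ := hvT
          exact ⟨s, Or.inl hs, hadj.symm⟩
        · have hvX : v ∈ X := by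
            intro hmem
            rcases hmem with hmem | hmem
            · exact hv (Or.inl hmem)
            · exact hvT hmem
          obtain ⟨u, hu, hadj⟩ := hR2'dom v hvX (fun h => hv (Or.inr h))
          exact ⟨u, Or.inr hu, hadj⟩
    -- I₂ := W ∪ (S' ∪ R₂) is a maximal independent set
    have hI₂ : IsMaxIndep G (W ∪ (S' ∪ R₂)) := by
      apply isMaxIndep_of_dominating
      · intro u v hu hv hadj
        rcases hu with hu | hu | hu <;> rcases hv with hv | hv | hv
        · exact hWind hu hv hadj
        · exact hv.2 ⟨u, hu, hadj.symm⟩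
        · exact (hR2X2 hv).2 ⟨u, hu, hadj.symm⟩
        · exact hu.2 ⟨v, hv, hadj⟩
        · exact hSind hu.1 hv.1 hadj
        · exact hXT _ (hR2X hv) ⟨u, hu.1, hadj.symm⟩
        · exact (hR2X2 hu).2 ⟨v, hv, hadj⟩
        · exact hXT _ (hR2X hu) ⟨v, hv.1, hadj⟩
        · exact hR2ind hu hv hadj
      · intro v hv
        by_cases hvS : v ∈ S
        · by_cases hvNW : v ∈ NW
          · obtain ⟨w, hw, hadj⟩ := hvNW
            exact ⟨w, Or.inl hw, hadj.symm⟩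
          · exact absurd (Or.inr (Or.inl ⟨hvS, hvNW⟩)) hv
        · by_cases hvT : v ∈ T
          · obtain ⟨u, hu, hadj⟩ := hWdom v hvT (fun h => hv (Or.inl h))
            exact ⟨u, Or.inl hu, hadj⟩
          · have hvX : v ∈ X := by
              intro hmem
              rcases hmem with hmem | hmem
              · exact hvS hmem
              · exact hvT hmem
            by_cases hvNW : v ∈ NW
            · obtain ⟨w, hw, hadj⟩ := hvNW
              exact ⟨w, Or.inl hw, hadj.symm⟩
            · obtain ⟨u, hu, hadj⟩ := hR2dom v ⟨hvX, hvNW⟩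
                (fun h => hv (Or.inr (Or.inr h)))
              exact ⟨u, Or.inr (Or.inr hu), hadj⟩
    -- cardinality identities
    have hcard₃ : S.ncard + R₂'.ncard = n := by
      have hdisj : Disjoint S R₂' := Set.disjoint_left.mpr (fun x hx hx' => hXS x (hR2'X hx') hx)
      rw [← Set.ncard_union_eq hdisj (Set.toFinite _) (Set.toFinite _)]
      exact hwc _ hI₃
    have hcard₂ : W.ncard + (S'.ncard + R₂.ncard) = n := by
      have hd1 : Disjoint S' R₂ :=
        Set.disjoint_left.mpr (fun x hx hx' => hXS x (hR2X hx') hx.1)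
      have hd2 : Disjoint W (S' ∪ R₂) := by
        rw [Set.disjoint_left]
        rintro x hx (hx' | hx')
        · exact hWS x hx hx'.1
        · exact hXT x (hR2X hx') (hWT hx)
      rw [← Set.ncard_union_eq hd1 (Set.toFinite _) (Set.toFinite _),
        ← Set.ncard_union_eq hd2 (Set.toFinite _) (Set.toFinite _)]
      exact hwc _ hI₂
    -- W is nonempty, so S' is a proper subset of S
    have hTne : T.Nonempty := by
      obtain ⟨s, hs⟩ := hSne
      obtain ⟨u, hadj⟩ := hSni s hs
      exact ⟨u, ⟨s, hs, hadj⟩⟩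
    have hWne : W.Nonempty := by
      rcases Set.eq_empty_or_nonempty W with rfl | h
      · obtain ⟨t, ht⟩ := hTne
        obtain ⟨u, hu, -⟩ := hWdom t ht (Set.notMem_empty t)
        exact absurd hu (Set.notMem_empty u)
      · exact h
    obtain ⟨w₀, hw₀⟩ := hWne
    obtain ⟨s₁, hs₁S, hadj₁⟩ := hWT hw₀
    have hs₁NW : s₁ ∈ NW := ⟨w₀, hw₀, hadj₁.symm⟩
    have hS'lt : S'.ncard < S.ncard := by
      apply Set.ncard_lt_ncard _ (Set.toFinite _)
      rw [Set.ssubset_iff_subset_ne]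
      refine ⟨Set.diff_subset, fun h => ?_⟩
      have : s₁ ∈ S' := h ▸ hs₁S
      exact this.2 hs₁NW
    -- induction hypothesis applied to S'
    have hIH : S'.ncard ≤ (nbrSet G S').ncard := by
      apply ih S' (by omega)
      · intro u v hu hv hadj
        exact hSind hu.1 hv.1 hadj
      · intro s hs
        exact hSni s hs.1
    have hsub : nbrSet G S' ⊆ T \ W := by
      rintro v ⟨s', hs', hadj⟩
      refine ⟨⟨s', hs'.1, hadj⟩, fun hvW => hs'.2 ⟨v, hvW, hadj.symm⟩⟩
    have hS'TW : S'.ncard ≤ (T \ W).ncard :=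
      hIH.trans (Set.ncard_le_ncard hsub (Set.toFinite _))
    have hTW : (T \ W).ncard + W.ncard = T.ncard :=
      Set.ncard_diff_add_ncard_of_subset hWT (Set.toFinite _)
    have hR2le : R₂.ncard ≤ R₂'.ncard := Set.ncard_le_ncard hR2sub (Set.toFinite _)
    omega

end Aux

/-- An unmixed graph with `2n` non-isolated vertices whose minimum vertex cover has
cardinality `n` has a perfect matching. -/
theorem unmixed_half_height_has_perfect_matching {V : Type*} [Fintype V] (G : SimpleGraph V)
    (n : ℕ) (hcard : Fintype.card V = 2 * n)
    (hni : ∀ v : V, ∃ u : V, G.Adj u v) (hu : Unmixed G)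
    (hmin : IsLeast {m : ℕ | ∃ C : Set V, IsVC G C ∧ C.ncard = m} n) :
    ∃ M : G.Subgraph, M.IsPerfectMatching := by
  classical
  obtain ⟨C, hC, hCn⟩ := hmin.1
  obtain ⟨C₀, hC₀sub, hC₀min⟩ := exists_minVC_subset hC
  have hC₀n : C₀.ncard = n := by
    refine le_antisymm (hCn ▸ Set.ncard_le_ncard hC₀sub (Set.toFinite _)) ?_
    exact hmin.2 ⟨C₀, hC₀min.1, rfl⟩
  have hNatCard : Nat.card V = 2 * n := by
    rw [Nat.card_eq_fintype_card, hcard]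
  -- every maximal independent set has cardinality n
  have hwc : ∀ I : Set V, IsMaxIndep G I → I.ncard = n := by
    intro I hI
    have h1 := hu _ _ (isMinVC_compl_of_isMaxIndep hI) hC₀min
    have h2 := Set.ncard_add_ncard_compl I (Set.toFinite _) (Set.toFinite _)
    rw [hNatCard] at h2
    omega
  set A := C₀ᶜ with hA
  have hAmax : IsMaxIndep G A := isMaxIndep_compl_of_isMinVC hC₀min
  have hAn : A.ncard = n := hwc A hAmax
  have hAc : Aᶜ = C₀ := compl_compl C₀
  haveI : Fintype ↥A := Fintype.ofFinite _
  set t : ↥A → Finset V := fun a => (Set.toFinite {v | G.Adj ↑a v}).toFinset with ht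
  have hall : ∀ s : Finset ↥A, s.card ≤ (s.biUnion t).card := by
    intro s
    set S : Set V := Subtype.val '' (↑s : Set ↥A) with hS
    have hSA : S ⊆ A := by
      rintro v ⟨a, -, rfl⟩
      exact a.2
    have hineq : S.ncard ≤ (nbrSet G S).ncard := by
      apply key_hall hwc S.ncard S le_rfl
      · intro u v hu hv hadj
        exact hAmax.1 (hSA hu) (hSA hv) hadj
      · intro v hv
        exact hni v
    have h1 : S.ncard = s.card := by
      rw [hS, Set.ncard_image_of_injective _ Subtype.val_injective, Set.ncard_coe_finset]
    have h2 : nbrSet G S = ↑(s.biUnion t) := by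
      ext v
      simp only [nbrSet, Set.mem_setOf_eq, Finset.coe_biUnion, Finset.mem_coe,
        Set.mem_iUnion, Set.Finite.coe_toFinset, ht, Set.mem_setOf_eq, hS]
      constructor
      · rintro ⟨x, ⟨a, ha, rfl⟩, hadj⟩
        exact ⟨a, ha, hadj.symm⟩
      · rintro ⟨a, ha, hadj⟩
        exact ⟨↑a, ⟨a, ha, rfl⟩, hadj.symm⟩
    calc s.card = S.ncard := h1.symm
      _ ≤ (nbrSet G S).ncard := hineq
      _ = (↑(s.biUnion t) : Set V).ncard := by rw [h2]
      _ = (s.biUnion t).card := Set.ncard_coe_finset _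
  obtain ⟨f, hfinj, hft⟩ := (Finset.all_card_le_biUnion_card_iff_exists_injective t).mp hall
  have hfadj : ∀ a : ↥A, G.Adj ↑a (f a) := by
    intro a
    have := hft a
    rw [ht, Set.Finite.mem_toFinset] at this
    exact this
  have hfA : ∀ a : ↥A, f a ∉ A := fun a hfa => hAmax.1 a.2 hfa (hfadj a)
  have hrange : Set.range f = Aᶜ := by
    apply Set.eq_of_subset_of_ncard_le _ _ (Set.toFinite _)
    · rintro v ⟨a, rfl⟩
      exact hfA a
    · have h1 : (Set.range f).ncard = A.ncard := by
        rw [← Set.image_univ, Set.ncard_image_of_injective _ hfinj, Set.ncard_univ,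
          Nat.card_coe_set_eq]
      have h2 : Aᶜ.ncard = n := by rw [hAc]; exact hC₀n
      omega
  refine ⟨{ verts := Set.univ,
            Adj := fun u v => ∃ a : ↥A, (u = ↑a ∧ v = f a) ∨ (u = f a ∧ v = ↑a),
            adj_sub := ?_,
            edge_vert := fun _ => Set.mem_univ _,
            symm := ⟨?_⟩ }, ?_, fun v => Set.mem_univ _⟩
  · rintro u v ⟨a, ⟨rfl, rfl⟩ | ⟨rfl, rfl⟩⟩
    · exact hfadj a
    · exact (hfadj a).symm
  · rintro u v ⟨a, ⟨h1, h2⟩ | ⟨h1, h2⟩⟩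
    · exact ⟨a, Or.inr ⟨h2, h1⟩⟩
    · exact ⟨a, Or.inl ⟨h2, h1⟩⟩
  · intro v _
    by_cases hv : v ∈ A
    · refine ⟨f ⟨v, hv⟩, ⟨⟨v, hv⟩, Or.inl ⟨rfl, rfl⟩⟩, ?_⟩
      rintro w ⟨a, ⟨hva, rfl⟩ | ⟨hvfa, rfl⟩⟩
      · have : a = ⟨v, hv⟩ := Subtype.ext hva.symm
        rw [this]
      · exact absurd (hvfa ▸ hv) (hfA a)
    · have hvc : v ∈ Aᶜ := hv
      rw [← hrange] at hvc
      obtain ⟨a₀, ha₀⟩ := hvc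
      refine ⟨↑a₀, ⟨a₀, Or.inr ⟨ha₀.symm, rfl⟩⟩, ?_⟩
      rintro w ⟨a, ⟨hva, rfl⟩ | ⟨hvfa, rfl⟩⟩
      · exact absurd (hva ▸ a.2) hv
      · have : a = a₀ := hfinj (by rw [ha₀, ← hvfa])
        rw [this]
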